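/- Fix n ≥ 2. The map assigning to each n-core partition the n-tuple (a_1, ..., a_n), where a_i is the number of beads at positive positions on runner i of its n-abacus minus the number of vacant non-positive positions on runner i, is a bijection from the set of n-core partitions onto the set of n-tuples of integers with a_1 + ... + a_n = 0. -/

import Mathlib

/-- A partition: a finite non-increasing list of positive integers. -/
def PartL : Type := {L : List ℕ // List.Pairwise (· ≥ ·) L ∧ ∀ x ∈ L, 0 < x}

/-- The `r`-th part (0-indexed) of a partition list, zero beyond its length. -/
def partFn (L : List ℕ) (r : ℕ) : ℕ := L.getD r 0

/-- The β-number sequence of a partition (0-indexed): `b j = λ_{j+1} - j`. -/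
def betaFun (L : List ℕ) : ℕ → ℤ := fun j => (partFn L j : ℤ) - j

/-- The set of β-numbers of a partition (positions of beads on the abacus). -/
def betaSet (L : List ℕ) : Set ℤ := Set.range (betaFun L)

/-- The abacus tuple of a partition: `a r` is the number of beads in strictly
positive positions on the runner of residue `r` mod `n`, minus the number of
vacant non-positive positions on that runner.  (The paper labels runners
`1, …, n`; runner `i` carries the positions of residue `i` mod `n`.) -/
noncomputable def abacus (n : ℕ) (L : List ℕ) : Fin n → ℤ := fun r =>
  ({m : ℤ | m ∈ betaSet L ∧ 0 < m ∧ m % (n : ℤ) = (r : ℤ)}.ncard : ℤ) -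
  ({m : ℤ | m ≤ 0 ∧ m % (n : ℤ) = (r : ℤ) ∧ m ∉ betaSet L}.ncard : ℤ)

/-- `λ` is an `n`-core iff in its abacus all beads are pushed up as high as
possible, i.e. the bead set is closed under subtracting `n`. -/
def IsCore (n : ℕ) (L : List ℕ) : Prop := ∀ m ∈ betaSet L, m - (n : ℤ) ∈ betaSet L

section basic
variable {L : List ℕ} (hs : List.Pairwise (· ≥ ·) L) (hp : ∀ x ∈ L, 0 < x)

lemma partFn_anti (hs : List.Pairwise (· ≥ ·) L) {i j : ℕ} (h : i ≤ j) :
    partFn L j ≤ partFn L i := by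
  unfold partFn
  rcases lt_or_ge j L.length with hj | hj
  · have hi : i < L.length := lt_of_le_of_lt h hj
    rw [List.getD_eq_getElem _ _ hj, List.getD_eq_getElem _ _ hi]
    rcases eq_or_lt_of_le h with rfl | h
    · exact le_refl _
    · exact List.pairwise_iff_get.1 hs ⟨i, hi⟩ ⟨j, hj⟩ h
  · rw [List.getD_eq_default _ _ hj]; exact Nat.zero_le _

lemma betaFun_strictAnti (hs : List.Pairwise (· ≥ ·) L) : StrictAnti (betaFun L) := by
  apply strictAnti_nat_of_succ_lt
  intro j
  have := partFn_anti hs (Nat.le_succ j)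
  unfold betaFun
  rw [Nat.succ_eq_add_one] at this
  push_cast
  omega

lemma betaFun_of_le {j : ℕ} (h : L.length ≤ j) : betaFun L j = -j := by
  unfold betaFun partFn
  rw [List.getD_eq_default _ _ h]
  simp

lemma partFn_pos_iff (hp : ∀ x ∈ L, 0 < x) {j : ℕ} :
    0 < partFn L j ↔ j < L.length := by
  unfold partFn
  rcases lt_or_ge j L.length with hj | hj
  · simp only [hj, iff_true, List.getD_eq_getElem _ _ hj]
    exact hp _ (List.getElem_mem _)
  · rw [List.getD_eq_default _ _ hj]; omega

lemma strictAnti_range_eq {f g : ℕ → ℤ} (hf : StrictAnti f) (hg : StrictAnti g)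
    (h : Set.range f = Set.range g) : f = g := by
  funext j
  induction j using Nat.strong_induction_on with
  | _ j ih =>
    obtain ⟨i, hi⟩ : f j ∈ Set.range g := h ▸ Set.mem_range_self j
    obtain ⟨i', hi'⟩ : g j ∈ Set.range f := h.symm ▸ Set.mem_range_self j
    rcases lt_trichotomy i j with hij | rfl | hij
    · have : f i = f j := by rw [ih i hij]; exact hi
      exact absurd (hf.injective this) (Nat.ne_of_lt hij)
    · exact hi.symm
    · have h1 : f j < g j := by rw [← hi]; exact hg hij
      rcases lt_trichotomy i' j with hij' | rfl | hij'
      · have : g i' = g j := by rw [← ih i' hij']; exact hi'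
        exact absurd (hg.injective this) (Nat.ne_of_lt hij')
      · exact hi'.symm.symm ▸ hi'
      · have h2 : g j < f j := by rw [← hi']; exact hf hij'
        omega

lemma betaSet_inj {L₁ L₂ : List ℕ} (hs₁ : List.Pairwise (· ≥ ·) L₁) (hp₁ : ∀ x ∈ L₁, 0 < x)
    (hs₂ : List.Pairwise (· ≥ ·) L₂) (hp₂ : ∀ x ∈ L₂, 0 < x)
    (h : betaSet L₁ = betaSet L₂) : L₁ = L₂ := by
  have hf : betaFun L₁ = betaFun L₂ :=
    strictAnti_range_eq (betaFun_strictAnti hs₁) (betaFun_strictAnti hs₂) h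
  have hpart : ∀ j, partFn L₁ j = partFn L₂ j := by
    intro j
    have := congrFun hf j
    unfold betaFun at this
    omega
  have hlen : L₁.length = L₂.length := by
    have h1 : ∀ j, j < L₁.length ↔ j < L₂.length := by
      intro j
      rw [← partFn_pos_iff hp₁, ← partFn_pos_iff hp₂, hpart]
    have := h1 L₁.length
    have := h1 L₂.length
    omega
  apply List.ext_getElem hlen
  intro i h1 h2
  have := hpart i
  unfold partFn at this
  rwa [List.getD_eq_getElem _ _ h1, List.getD_eq_getElem _ _ h2] at this

lemma charge_eq {L : List ℕ} (hs : List.Pairwise (· ≥ ·) L) (hp : ∀ x ∈ L, 0 < x) :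
    {m : ℤ | m ∈ betaSet L ∧ 0 < m}.ncard = {m : ℤ | m ≤ 0 ∧ m ∉ betaSet L}.ncard := by
  classical
  set ℓ := L.length with hℓ
  have hex : ∃ j, betaFun L j ≤ 0 := ⟨ℓ, by rw [betaFun_of_le le_rfl]; omega⟩
  set k := Nat.find hex with hk
  have hkle : betaFun L k ≤ 0 := Nat.find_spec hex
  have hklt : ∀ j < k, 0 < betaFun L j := fun j hj => by
    have := Nat.find_min hex hj; omega
  have hge : ∀ j, k ≤ j → betaFun L j ≤ 0 := fun j hj =>
    le_trans ((betaFun_strictAnti hs).antitone hj) hkle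
  have hkl : k ≤ ℓ := Nat.find_min' hex (by rw [betaFun_of_le le_rfl]; omega)
  have hinj : Function.Injective (betaFun L) := (betaFun_strictAnti hs).injective
  -- positive part
  have hP : {m : ℤ | m ∈ betaSet L ∧ 0 < m} = betaFun L '' Set.Iio k := by
    ext m
    constructor
    · rintro ⟨⟨j, rfl⟩, hpos⟩
      refine ⟨j, ?_, rfl⟩
      by_contra hj
      exact absurd (hge j (not_lt.1 hj)) (not_le.2 hpos)
    · rintro ⟨j, hj, rfl⟩
      exact ⟨⟨j, rfl⟩, hklt j hj⟩
  have hPcard : {m : ℤ | m ∈ betaSet L ∧ 0 < m}.ncard = k := by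
    rw [hP, Set.ncard_image_of_injective _ hinj, ← Finset.coe_range,
      Set.ncard_coe_finset, Finset.card_range]
  -- negative part
  have him_sub : betaFun L '' Set.Ico k ℓ ⊆ Set.Ioc (-(ℓ:ℤ)) 0 := by
    rintro m ⟨j, ⟨hj1, hj2⟩, rfl⟩
    constructor
    · have h1 : 0 < partFn L j := (partFn_pos_iff hp).2 hj2
      unfold betaFun
      omega
    · exact hge j hj1
  have hQ : {m : ℤ | m ≤ 0 ∧ m ∉ betaSet L} =
      Set.Ioc (-(ℓ:ℤ)) 0 \ betaFun L '' Set.Ico k ℓ := by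
    ext m
    constructor
    · rintro ⟨hm0, hmB⟩
      refine ⟨⟨?_, hm0⟩, fun hmem => hmB ⟨_, (hmem.choose_spec).2⟩⟩
      by_contra hle
      apply hmB
      refine ⟨(-m).toNat, ?_⟩
      rw [betaFun_of_le (by omega)]
      omega
    · rintro ⟨⟨hm1, hm2⟩, hmim⟩
      refine ⟨hm2, ?_⟩
      rintro ⟨j, rfl⟩
      apply hmim
      refine ⟨j, ⟨?_, ?_⟩, rfl⟩
      · by_contra hjk
        exact absurd (hklt j (not_le.1 hjk)) (not_lt.2 hm2)
      · by_contra hjl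
        rw [betaFun_of_le (not_lt.1 hjl)] at hm1
        have : ℓ ≤ j := not_lt.1 hjl
        omega
  have hQcard : {m : ℤ | m ≤ 0 ∧ m ∉ betaSet L}.ncard = k := by
    rw [hQ, Set.ncard_diff him_sub ((Set.finite_Ico _ _).image _),
      Set.ncard_image_of_injective _ hinj]
    rw [← Finset.coe_Ioc, Set.ncard_coe_finset, Int.card_Ioc,
      ← Finset.coe_Ico, Set.ncard_coe_finset, Nat.card_Ico]
    omega
  rw [hPcard, hQcard]

lemma sum_fiber {n : ℕ} (hn : 0 < n) {S : Set ℤ} (hS : S.Finite) :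
    ∑ r : Fin n, ({m ∈ S | m % (n : ℤ) = (r : ℤ)}).ncard = S.ncard := by
  classical
  have hn' : (0:ℤ) < n := by exact_mod_cast hn
  let f : ℤ → Fin n := fun m => ⟨(m % n).toNat, by
    have h1 := Int.emod_nonneg m (by omega : (n:ℤ) ≠ 0)
    have h2 := Int.emod_lt_of_pos m hn'
    omega⟩
  have key : ∀ r : Fin n, {m ∈ S | m % (n:ℤ) = (r:ℤ)} =
      ↑(hS.toFinset.filter (fun m => f m = r)) := by
    intro r
    ext m
    simp only [Finset.coe_filter, Set.mem_setOf_eq, Set.Finite.mem_toFinset]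
    have h1 := Int.emod_nonneg m (by omega : (n:ℤ) ≠ 0)
    constructor
    · rintro ⟨h, h2⟩
      refine ⟨h, ?_⟩
      apply Fin.ext
      show (m % n).toNat = r.val
      omega
    · rintro ⟨h, h2⟩
      refine ⟨h, ?_⟩
      have : (m % n).toNat = r.val := congrArg Fin.val h2
      omega
  calc ∑ r : Fin n, ({m ∈ S | m % (n : ℤ) = (r : ℤ)}).ncard
      = ∑ r : Fin n, (hS.toFinset.filter (fun m => f m = r)).card := by
        refine Finset.sum_congr rfl fun r _ => ?_
        rw [key r, Set.ncard_coe_finset]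
    _ = hS.toFinset.card := by
        rw [← Finset.card_eq_sum_card_fiberwise (fun x _ => Finset.mem_univ (f x))]
    _ = S.ncard := (Set.ncard_eq_toFinset_card _ hS).symm

lemma ncard_runner {n : ℕ} (hn : 0 < n) {r : ℤ} (hr0 : 0 ≤ r) (hrn : r < n) (a b : ℤ) :
    {m : ℤ | a < m ∧ m ≤ b ∧ m % (n:ℤ) = r}.ncard = ((b - r)/n - (a - r)/n).toNat := by
  have hn' : (0:ℤ) < n := by exact_mod_cast hn
  have hset : {m : ℤ | a < m ∧ m ≤ b ∧ m % (n:ℤ) = r} =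
      (fun j => r + n * j) '' Set.Ioc ((a - r)/n) ((b - r)/n) := by
    ext m
    constructor
    · rintro ⟨h1, h2, h3⟩
      have hd : (n:ℤ) ∣ m - r := Int.dvd_self_sub_of_emod_eq h3
      obtain ⟨j, hj⟩ := hd
      have hcomm : j * (n:ℤ) = (n:ℤ) * j := mul_comm _ _
      refine ⟨j, ⟨?_, ?_⟩, ?_⟩
      · rw [Int.ediv_lt_iff_lt_mul hn']
        omega
      · rw [Int.le_ediv_iff_mul_le hn']
        omega
      · show r + (n:ℤ) * j = m
        omega
    · rintro ⟨j, ⟨hj1, hj2⟩, rfl⟩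
      rw [Int.ediv_lt_iff_lt_mul hn'] at hj1
      rw [Int.le_ediv_iff_mul_le hn'] at hj2
      have hcomm : j * (n:ℤ) = (n:ℤ) * j := mul_comm _ _
      refine ⟨by show a < r + (n:ℤ)*j; omega, by show r + (n:ℤ)*j ≤ b; omega, ?_⟩
      show ((r + (n:ℤ)*j) % (n:ℤ)) = r
      rw [Int.add_mul_emod_self_left, Int.emod_eq_of_lt hr0 hrn]
  have hinj : Function.Injective (fun j : ℤ => r + n * j) := by
    intro x y h
    simp only at h
    have := mul_left_cancel₀ (by omega : (n:ℤ) ≠ 0) (by omega : (n:ℤ) * x = n * y)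
    exact this
  rw [hset, Set.ncard_image_of_injective _ hinj, ← Finset.coe_Ioc,
    Set.ncard_coe_finset, Int.card_Ioc]

lemma abacus_eq {n : ℕ} (hn : 0 < n) {L : List ℕ} (r : Fin n) (t : ℤ)
    (hrun : ∀ m : ℤ, m % (n:ℤ) = (r:ℤ) → (m ∈ betaSet L ↔ m ≤ t)) :
    abacus n L r = (t - r)/n - (0 - r)/n := by
  have hr0 : (0:ℤ) ≤ (r:ℤ) := by positivity
  have hrn : ((r:ℤ)) < n := by exact_mod_cast r.isLt
  have hP : {m : ℤ | m ∈ betaSet L ∧ 0 < m ∧ m % (n:ℤ) = (r:ℤ)} =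
      {m : ℤ | 0 < m ∧ m ≤ t ∧ m % (n:ℤ) = (r:ℤ)} := by
    ext m
    constructor
    · rintro ⟨h1, h2, h3⟩
      exact ⟨h2, (hrun m h3).1 h1, h3⟩
    · rintro ⟨h1, h2, h3⟩
      exact ⟨(hrun m h3).2 h2, h1, h3⟩
  have hQ : {m : ℤ | m ≤ 0 ∧ m % (n:ℤ) = (r:ℤ) ∧ m ∉ betaSet L} =
      {m : ℤ | t < m ∧ m ≤ 0 ∧ m % (n:ℤ) = (r:ℤ)} := by
    ext m
    constructor
    · rintro ⟨h1, h2, h3⟩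
      refine ⟨?_, h1, h2⟩
      by_contra hh
      exact h3 ((hrun m h2).2 (not_lt.1 hh))
    · rintro ⟨h1, h2, h3⟩
      refine ⟨h2, h3, fun hm => ?_⟩
      exact absurd ((hrun m h3).1 hm) (not_le.2 h1)
  unfold abacus
  rw [hP, hQ, ncard_runner hn hr0 hrn 0 t, ncard_runner hn hr0 hrn t 0]
  omega

lemma core_sub_mul {n : ℕ} {L : List ℕ} (hc : IsCore n L) (k : ℕ) :
    ∀ m ∈ betaSet L, m - (n:ℤ) * k ∈ betaSet L := by
  induction k with
  | zero => intro m hm; simpa using hm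
  | succ k ih =>
    intro m hm
    have h2 := hc _ (ih m hm)
    have he : m - (n:ℤ) * ((k:ℤ)+1) = m - (n:ℤ)*(k:ℤ) - (n:ℤ) := by ring
    push_cast
    rw [he]
    exact h2

lemma core_exists_t {n : ℕ} (hn : 0 < n) {L : List ℕ} (hs : List.Pairwise (· ≥ ·) L)
    (hc : IsCore n L) (r : Fin n) :
    ∃ t : ℤ, t % (n:ℤ) = (r:ℤ) ∧ ∀ m : ℤ, m % (n:ℤ) = (r:ℤ) → (m ∈ betaSet L ↔ m ≤ t) := by
  have hn' : (0:ℤ) < n := by exact_mod_cast hn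
  have hr0 : (0:ℤ) ≤ (r:ℤ) := by positivity
  have hrn : ((r:ℤ)) < n := by exact_mod_cast r.isLt
  set P : ℤ → Prop := fun z => z ∈ betaSet L ∧ z % (n:ℤ) = (r:ℤ) with hPdef
  have hbdd : ∃ b : ℤ, ∀ z, P z → z ≤ b := by
    refine ⟨betaFun L 0, ?_⟩
    rintro z ⟨⟨j, rfl⟩, _⟩
    exact (betaFun_strictAnti hs).antitone (Nat.zero_le j)
  have hne : ∃ z, P z := by
    set c : ℕ := L.length + 1 with hcdef
    set j : ℕ := n * c - r.val with hj'
    have hrlen : r.val ≤ n * c := le_trans (le_of_lt r.isLt) (Nat.le_mul_of_pos_right _ (by omega))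
    have hjlen : L.length ≤ j := by
      have h3 : L.length ≤ n * L.length := Nat.le_mul_of_pos_left _ hn
      have h4 : n * c = n * L.length + n := by rw [hcdef]; ring
      have h2 : r.val < n := r.isLt
      omega
    refine ⟨betaFun L j, ⟨j, rfl⟩, ?_⟩
    rw [betaFun_of_le hjlen]
    have hcast : (j:ℤ) = (n:ℤ) * c - (r:ℤ) := by
      rw [hj', Nat.cast_sub hrlen]
      push_cast
      ring
    rw [hcast]
    have heq : -((n:ℤ) * c - (r:ℤ)) = (r:ℤ) + (n:ℤ) * (-(c:ℤ)) := by ring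
    rw [heq, Int.add_mul_emod_self_left, Int.emod_eq_of_lt hr0 hrn]
  obtain ⟨t, ⟨htB, htr⟩, hmax⟩ := Int.exists_greatest_of_bdd hbdd hne
  refine ⟨t, htr, fun m hm => ⟨fun hmB => hmax m ⟨hmB, hm⟩, fun hle => ?_⟩⟩
  have hd : (n:ℤ) ∣ t - m := by
    have : (t - m) % n = 0 := by
      rw [Int.sub_emod, htr, hm, sub_self, Int.zero_emod]
    exact Int.dvd_of_emod_eq_zero this
  obtain ⟨c, hcc⟩ := hd
  have hc0 : 0 ≤ c := by
    by_contra hcneg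
    have : (n:ℤ) * c < 0 := mul_neg_of_pos_of_neg hn' (by omega)
    omega
  have : m = t - (n:ℤ) * (c.toNat : ℕ) := by
    rw [Int.toNat_of_nonneg hc0]
    omega
  rw [this]
  exact core_sub_mul hc c.toNat t htB

lemma strictAnti_le_sub {f : ℕ → ℤ} (hf : StrictAnti f) (j : ℕ) : f j ≤ f 0 - j := by
  induction j with
  | zero => simp
  | succ j ih =>
    have h1 : f (j+1) < f j := hf (Nat.lt_succ_self j)
    push_cast
    omega

lemma exists_enum {B : Set ℤ} (T N : ℤ) (hT : ∀ m ∈ B, m ≤ T) (hN : ∀ m ≤ N, m ∈ B) :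
    ∃ f : ℕ → ℤ, StrictAnti f ∧ Set.range f = B := by
  classical
  set p : ℕ → Prop := fun k => (T - (k:ℤ)) ∈ B with hp
  have hinf : (setOf p).Infinite := by
    apply Set.Infinite.mono (s := Set.Ici (T - N).toNat) _ (Set.Ici_infinite _)
    intro k hk
    simp only [Set.mem_Ici] at hk
    show (T - (k:ℤ)) ∈ B
    apply hN
    have : (T - N) ≤ ((T - N).toNat : ℤ) := Int.self_le_toNat _
    have : ((T - N).toNat : ℤ) ≤ (k:ℤ) := by exact_mod_cast hk
    omega
  refine ⟨fun j => T - (Nat.nth p j : ℤ), ?_, ?_⟩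
  · intro i j hij
    have := (Nat.nth_lt_nth hinf).2 hij
    have h2 : (Nat.nth p i : ℤ) < Nat.nth p j := by exact_mod_cast this
    show T - (Nat.nth p j : ℤ) < T - (Nat.nth p i : ℤ)
    omega
  · ext m
    constructor
    · rintro ⟨j, rfl⟩
      exact Nat.nth_mem_of_infinite hinf j
    · intro hm
      have hmT : m ≤ T := hT m hm
      set k : ℕ := (T - m).toNat with hk
      have hkc : (k:ℤ) = T - m := Int.toNat_of_nonneg (by omega)
      have hpk : p k := by
        show (T - (k:ℤ)) ∈ B
        rw [hkc]
        simpa using hm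
      refine ⟨Nat.count p k, ?_⟩
      show T - (Nat.nth p (Nat.count p k) : ℤ) = m
      rw [Nat.nth_count hpk]
      omega

lemma surj_core {n : ℕ} (hn : 0 < n) (a : Fin n → ℤ) (ha : ∑ r, a r = 0) :
    ∃ L : List ℕ, List.Pairwise (· ≥ ·) L ∧ (∀ x ∈ L, 0 < x) ∧ IsCore n L ∧
      abacus n L = a := by
  classical
  have hn' : (0:ℤ) < n := by exact_mod_cast hn
  set s : Fin n → ℤ := fun r => a r + (0 - (r:ℤ))/n with hs
  set t : Fin n → ℤ := fun r => (r:ℤ) + n * s r with htdef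
  set res : ℤ → Fin n := fun m => ⟨(m % n).toNat, by
    have h1 := Int.emod_nonneg m (by omega : (n:ℤ) ≠ 0)
    have h2 := Int.emod_lt_of_pos m hn'
    omega⟩ with hresdef
  have hres : ∀ m : ℤ, ((res m : ℕ) : ℤ) = m % n := by
    intro m
    have h1 := Int.emod_nonneg m (by omega : (n:ℤ) ≠ 0)
    show (((m % n).toNat : ℕ) : ℤ) = m % n
    omega
  set B : Set ℤ := {m : ℤ | m ≤ t (res m)} with hBdef
  have hBmem : ∀ (m : ℤ) (r : Fin n), m % n = (r:ℤ) → (m ∈ B ↔ m ≤ t r) := by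
    intro m r hm
    have : res m = r := by
      apply Fin.ext
      have := hres m
      rw [hm] at this
      exact_mod_cast this
    rw [hBdef]
    simp only [Set.mem_setOf_eq, this]
  have ht_mod : ∀ r : Fin n, t r % n = (r:ℤ) := by
    intro r
    have hr0 : (0:ℤ) ≤ (r:ℤ) := by positivity
    have hrn : ((r:ℤ)) < n := by exact_mod_cast r.isLt
    show ((r:ℤ) + n * s r) % n = (r:ℤ)
    rw [Int.add_mul_emod_self_left, Int.emod_eq_of_lt hr0 hrn]
  -- bounds
  obtain ⟨T, hT⟩ := Finite.exists_le t
  obtain ⟨N', hN'⟩ := Finite.exists_le (fun r => -(t r))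
  set N : ℤ := -N' with hNdef
  have hTB : ∀ m ∈ B, m ≤ T := fun m hm => le_trans hm (hT _)
  have hNB : ∀ m : ℤ, m ≤ N → m ∈ B := by
    intro m hm
    show m ≤ t (res m)
    have := hN' (res m)
    omega
  obtain ⟨f, hfa, hfr⟩ := exists_enum T N hTB hNB
  -- charge computation
  set PB : Set ℤ := {m : ℤ | m ∈ B ∧ 0 < m} with hPBdef
  set QB : Set ℤ := {m : ℤ | m ≤ 0 ∧ m ∉ B} with hQBdef
  have hPBfin : PB.Finite := by
    apply Set.Finite.subset (Set.finite_Ioc 0 T)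
    rintro m ⟨h1, h2⟩
    exact ⟨h2, hTB m h1⟩
  have hQBfin : QB.Finite := by
    apply Set.Finite.subset (Set.finite_Ioc N 0)
    rintro m ⟨h1, h2⟩
    refine ⟨?_, h1⟩
    by_contra hh
    exact h2 (hNB m (by omega))
  have hfiberP : ∀ r : Fin n, {m ∈ PB | m % (n:ℤ) = (r:ℤ)}.ncard = (a r).toNat := by
    intro r
    have hr0 : (0:ℤ) ≤ (r:ℤ) := by positivity
    have hrn : ((r:ℤ)) < n := by exact_mod_cast r.isLt
    have hseteq : {m ∈ PB | m % (n:ℤ) = (r:ℤ)} = {m : ℤ | 0 < m ∧ m ≤ t r ∧ m % (n:ℤ) = (r:ℤ)} := by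
      ext m
      simp only [hPBdef, Set.mem_setOf_eq]
      constructor
      · rintro ⟨⟨h1, h2⟩, h3⟩
        exact ⟨h2, (hBmem m r h3).1 h1, h3⟩
      · rintro ⟨h1, h2, h3⟩
        exact ⟨⟨(hBmem m r h3).2 h2, h1⟩, h3⟩
    rw [hseteq, ncard_runner hn hr0 hrn 0 (t r)]
    have hdiv : (t r - (r:ℤ))/n = s r := by
      show ((r:ℤ) + n * s r - (r:ℤ))/n = s r
      rw [add_sub_cancel_left, Int.mul_ediv_cancel_left _ (by omega : (n:ℤ) ≠ 0)]
    rw [hdiv]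
    congr 1
    rw [hs]
    simp only
    omega
  have hfiberQ : ∀ r : Fin n, {m ∈ QB | m % (n:ℤ) = (r:ℤ)}.ncard = (-(a r)).toNat := by
    intro r
    have hr0 : (0:ℤ) ≤ (r:ℤ) := by positivity
    have hrn : ((r:ℤ)) < n := by exact_mod_cast r.isLt
    have hseteq : {m ∈ QB | m % (n:ℤ) = (r:ℤ)} = {m : ℤ | t r < m ∧ m ≤ 0 ∧ m % (n:ℤ) = (r:ℤ)} := by
      ext m
      simp only [hQBdef, Set.mem_setOf_eq]
      constructor
      · rintro ⟨⟨h1, h2⟩, h3⟩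
        refine ⟨?_, h1, h3⟩
        by_contra hh
        exact h2 ((hBmem m r h3).2 (not_lt.1 hh))
      · rintro ⟨h1, h2, h3⟩
        refine ⟨⟨h2, fun hm => absurd ((hBmem m r h3).1 hm) (not_le.2 h1)⟩, h3⟩
    rw [hseteq, ncard_runner hn hr0 hrn (t r) 0]
    have hdiv : (t r - (r:ℤ))/n = s r := by
      show ((r:ℤ) + n * s r - (r:ℤ))/n = s r
      rw [add_sub_cancel_left, Int.mul_ediv_cancel_left _ (by omega : (n:ℤ) ≠ 0)]
    rw [hdiv]
    congr 1
    rw [hs]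
    simp only
    omega
  have hcharge : (PB.ncard : ℤ) = QB.ncard := by
    have h1 : ∑ r : Fin n, {m ∈ PB | m % (n:ℤ) = (r:ℤ)}.ncard = PB.ncard := sum_fiber hn hPBfin
    have h2 : ∑ r : Fin n, {m ∈ QB | m % (n:ℤ) = (r:ℤ)}.ncard = QB.ncard := sum_fiber hn hQBfin
    have h3 : ∑ r : Fin n, (a r).toNat = PB.ncard := by
      rw [← h1]; exact Finset.sum_congr rfl fun r _ => (hfiberP r).symm
    have h4 : ∑ r : Fin n, (-(a r)).toNat = QB.ncard := by
      rw [← h2]; exact Finset.sum_congr rfl fun r _ => (hfiberQ r).symm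
    have h5 : (PB.ncard : ℤ) - QB.ncard = ∑ r, a r := by
      rw [← h3, ← h4]
      push_cast
      rw [← Finset.sum_sub_distrib]
      exact Finset.sum_congr rfl fun r _ => Int.toNat_sub_toNat_neg (a r)
    rw [ha] at h5
    omega
  -- the enumeration eventually equals -j
  have hcount : ∀ j : ℕ, (B ∩ Set.Ioi (f j)).ncard = j := by
    intro j
    have him : B ∩ Set.Ioi (f j) = f '' Set.Iio j := by
      ext m
      constructor
      · rintro ⟨hm, hgt⟩
        obtain ⟨i, rfl⟩ := hfr ▸ hm
        refine ⟨i, ?_, rfl⟩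
        by_contra hh
        exact absurd (hfa.antitone (not_lt.1 hh)) (not_le.2 hgt)
      · rintro ⟨i, hi, rfl⟩
        exact ⟨hfr ▸ Set.mem_range_self i, hfa hi⟩
    rw [him, Set.ncard_image_of_injective _ hfa.injective, ← Finset.coe_range,
      Set.ncard_coe_finset, Finset.card_range]
  have heven : ∀ j : ℕ, f j ≤ min N 0 → f j = -j := by
    intro j hj
    have hsplit : B ∩ Set.Ioi (f j) = PB ∪ (B ∩ Set.Ioc (f j) 0) := by
      ext m
      constructor
      · rintro ⟨hm, hgt⟩
        rcases le_or_gt m 0 with h | h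
        · exact Or.inr ⟨hm, hgt, h⟩
        · exact Or.inl ⟨hm, h⟩
      · rintro (⟨hm, hpos⟩ | ⟨hm, hgt, _⟩)
        · refine ⟨hm, ?_⟩
          show f j < m
          omega
        · exact ⟨hm, hgt⟩
    have hdisj : Disjoint PB (B ∩ Set.Ioc (f j) 0) := by
      rw [Set.disjoint_left]
      rintro m ⟨_, hpos⟩ ⟨_, _, hle⟩
      omega
    have hIocsplit : Set.Ioc (f j) 0 = (B ∩ Set.Ioc (f j) 0) ∪ QB := by
      ext m
      constructor
      · rintro ⟨h1, h2⟩
        by_cases hm : m ∈ B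
        · exact Or.inl ⟨hm, h1, h2⟩
        · exact Or.inr ⟨h2, hm⟩
      · rintro (⟨_, h1, h2⟩ | ⟨h1, h2⟩)
        · exact ⟨h1, h2⟩
        · refine ⟨?_, h1⟩
          have : ¬ (m ≤ N) := fun hh => h2 (hNB m hh)
          omega
    have hdisj2 : Disjoint (B ∩ Set.Ioc (f j) 0) QB := by
      rw [Set.disjoint_left]
      rintro m ⟨hm, _⟩ ⟨_, hnm⟩
      exact hnm hm
    have hBIfin : (B ∩ Set.Ioc (f j) 0).Finite := (Set.finite_Ioc _ _).subset Set.inter_subset_right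
    have e1 : (PB ∪ (B ∩ Set.Ioc (f j) 0)).ncard = PB.ncard + (B ∩ Set.Ioc (f j) 0).ncard :=
      Set.ncard_union_eq hdisj hPBfin hBIfin
    have e3 : (Set.Ioc (f j) 0).ncard = (0 - f j).toNat := by
      rw [← Finset.coe_Ioc, Set.ncard_coe_finset, Int.card_Ioc]
    have e2 := Set.ncard_union_eq hdisj2 hBIfin hQBfin
    rw [← hIocsplit, e3] at e2
    have e4 := hcount j
    rw [hsplit, e1] at e4
    omega
  set ℓ₀ : ℕ := (f 0 - min N 0).toNat with hl0def
  have heven' : ∀ j : ℕ, ℓ₀ ≤ j → f j = -j := by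
    intro j hj
    apply heven
    have h1 := strictAnti_le_sub hfa j
    have h2 : (ℓ₀ : ℤ) ≤ j := by exact_mod_cast hj
    have h3 : f 0 - min N 0 ≤ (ℓ₀:ℤ) := Int.self_le_toNat _
    omega
  -- build the list
  set g : ℕ → ℤ := fun j => f j + j with hgdef
  have hganti : Antitone g := by
    apply antitone_nat_of_succ_le
    intro j
    have := hfa (Nat.lt_succ_self j)
    simp only [Nat.succ_eq_add_one] at this
    show f (j+1) + ((j+1:ℕ):ℤ) ≤ f j + (j:ℤ)
    push_cast
    omega
  have hg0 : ∀ j, ℓ₀ ≤ j → g j = 0 := by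
    intro j hj
    show f j + (j:ℤ) = 0
    rw [heven' j hj]
    ring
  have hgnn : ∀ j, 0 ≤ g j := by
    intro j
    rcases le_total ℓ₀ j with h | h
    · rw [hg0 j h]
    · rw [← hg0 ℓ₀ le_rfl]
      exact hganti h
  have hgex : ∃ j, g j ≤ 0 := ⟨ℓ₀, le_of_eq (hg0 ℓ₀ le_rfl)⟩
  set ℓ : ℕ := Nat.find hgex with hldef
  have hlpos : ∀ j, j < ℓ → 0 < g j := fun j hj => by
    have := Nat.find_min hgex hj
    omega
  have hl0 : ∀ j, ℓ ≤ j → g j = 0 := fun j hj => by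
    have h1 := Nat.find_spec hgex
    rw [← hldef] at h1
    have h2 := hganti hj
    have h3 := hgnn j
    omega
  set L : List ℕ := (List.range ℓ).map (fun j => (g j).toNat) with hLdef
  have hLlen : L.length = ℓ := by simp [hLdef]
  have hsorted : List.Pairwise (· ≥ ·) L := by
    apply List.Pairwise.map (fun j => (g j).toNat)
      (fun i j (hij : i < j) => ?_) List.pairwise_lt_range
    show (g i).toNat ≥ (g j).toNat
    have := hganti (le_of_lt hij)
    have := hgnn j
    omega
  have hpos : ∀ x ∈ L, 0 < x := by
    intro x hx
    rw [hLdef] at hx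
    simp only [List.mem_map, List.mem_range] at hx
    obtain ⟨j, hj, rfl⟩ := hx
    have := hlpos j hj
    omega
  have hpart : ∀ j, (partFn L j : ℤ) = g j := by
    intro j
    rcases lt_or_ge j ℓ with hj | hj
    · have hj' : j < L.length := by omega
      unfold partFn
      rw [List.getD_eq_getElem _ _ hj']
      have : L[j] = (g j).toNat := by
        simp [hLdef]
      rw [this]
      exact Int.toNat_of_nonneg (hgnn j)
    · unfold partFn
      rw [List.getD_eq_default _ _ (by omega)]
      rw [hl0 j hj]
      simp
  have hbeta : betaFun L = f := by
    funext j
    unfold betaFun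
    rw [hpart j]
    show f j + j - j = f j
    ring
  have hBset : betaSet L = B := by
    unfold betaSet
    rw [hbeta, hfr]
  refine ⟨L, hsorted, hpos, ?_, ?_⟩
  · intro m hm
    rw [hBset] at hm ⊢
    have hmr := hres m
    have h2 : m ≤ t (res m) := (hBmem m (res m) hmr.symm).1 hm
    have h1 : (m - (n:ℤ)) % n = m % n := by
      have he : m - (n:ℤ) = m + (n:ℤ) * (-1) := by ring
      rw [he, Int.add_mul_emod_self_left]
    apply (hBmem (m - n) (res m) (by rw [h1]; exact hmr.symm)).2
    omega
  · funext r
    rw [abacus_eq hn r (t r) (fun m hm => by rw [hBset]; exact hBmem m r hm)]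
    have hdiv : (t r - (r:ℤ))/n = s r := by
      show ((r:ℤ) + n * s r - (r:ℤ))/n = s r
      rw [add_sub_cancel_left, Int.mul_ediv_cancel_left _ (by omega : (n:ℤ) ≠ 0)]
    rw [hdiv, hs]
    simp only
    ring


/-- The abacus map is a bijection from the set of `n`-core partitions onto the
set of `n`-tuples of integers summing to `0`. -/
theorem stmt2 (n : ℕ) (hn : 2 ≤ n) :
    Set.BijOn (fun lam : PartL => abacus n lam.1)
      {lam : PartL | IsCore n lam.1}
      {a : Fin n → ℤ | ∑ r, a r = 0} := by
  have hn0 : 0 < n := by omega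
  refine ⟨?_, ?_, ?_⟩
  · -- MapsTo
    rintro ⟨L, hs, hp⟩ _
    show ∑ r, abacus n L r = 0
    have hPfin : {m : ℤ | m ∈ betaSet L ∧ 0 < m}.Finite := by
      apply Set.Finite.subset (Set.finite_Ioc 0 (betaFun L 0))
      rintro m ⟨⟨j, rfl⟩, h2⟩
      exact ⟨h2, (betaFun_strictAnti hs).antitone (Nat.zero_le j)⟩
    have hQfin : {m : ℤ | m ≤ 0 ∧ m ∉ betaSet L}.Finite := by
      apply Set.Finite.subset (Set.finite_Ioc (-(L.length:ℤ)) 0)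
      rintro m ⟨h1, h2⟩
      refine ⟨?_, h1⟩
      by_contra hh
      apply h2
      refine ⟨(-m).toNat, ?_⟩
      rw [betaFun_of_le (by omega)]
      omega
    have h1 := sum_fiber hn0 hPfin
    have h2 := sum_fiber hn0 hQfin
    have hch := charge_eq hs hp
    have e : ∀ r : Fin n, abacus n L r =
        ({m ∈ {m : ℤ | m ∈ betaSet L ∧ 0 < m} | m % (n:ℤ) = (r:ℤ)}.ncard : ℤ) -
        ({m ∈ {m : ℤ | m ≤ 0 ∧ m ∉ betaSet L} | m % (n:ℤ) = (r:ℤ)}.ncard : ℤ) := by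
      intro r
      have eP : {m : ℤ | m ∈ betaSet L ∧ 0 < m ∧ m % (n : ℤ) = (r : ℤ)} =
          {m ∈ {m : ℤ | m ∈ betaSet L ∧ 0 < m} | m % (n:ℤ) = (r:ℤ)} := by
        ext m; simp only [Set.mem_setOf_eq]; tauto
      have eQ : {m : ℤ | m ≤ 0 ∧ m % (n : ℤ) = (r : ℤ) ∧ m ∉ betaSet L} =
          {m ∈ {m : ℤ | m ≤ 0 ∧ m ∉ betaSet L} | m % (n:ℤ) = (r:ℤ)} := by
        ext m; simp only [Set.mem_setOf_eq]; tauto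
      unfold abacus
      rw [eP, eQ]
    have hsum : ∑ r, abacus n L r =
        ((∑ r : Fin n, {m ∈ {m : ℤ | m ∈ betaSet L ∧ 0 < m} | m % (n:ℤ) = (r:ℤ)}.ncard : ℕ) : ℤ) -
        ((∑ r : Fin n, {m ∈ {m : ℤ | m ≤ 0 ∧ m ∉ betaSet L} | m % (n:ℤ) = (r:ℤ)}.ncard : ℕ) : ℤ) := by
      rw [Finset.sum_congr rfl fun r _ => e r, Finset.sum_sub_distrib]
      push_cast
      rfl
    rw [hsum, h1, h2, hch]
    ring
  · -- InjOn
    rintro ⟨L₁, hs₁, hp₁⟩ hc₁ ⟨L₂, hs₂, hp₂⟩ hc₂ hab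
    have hc₁ : IsCore n L₁ := hc₁
    have hc₂ : IsCore n L₂ := hc₂
    have hab : abacus n L₁ = abacus n L₂ := hab
    have hBeq : betaSet L₁ = betaSet L₂ := by
      have key : ∀ r : Fin n, ∀ m : ℤ, m % (n:ℤ) = (r:ℤ) →
          (m ∈ betaSet L₁ ↔ m ∈ betaSet L₂) := by
        intro r m hm
        obtain ⟨t₁, ht₁r, hrun₁⟩ := core_exists_t hn0 hs₁ hc₁ r
        obtain ⟨t₂, ht₂r, hrun₂⟩ := core_exists_t hn0 hs₂ hc₂ r
        have he₁ := abacus_eq hn0 r t₁ hrun₁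
        have he₂ := abacus_eq hn0 r t₂ hrun₂
        have hq : (t₁ - (r:ℤ))/n = (t₂ - (r:ℤ))/n := by
          have := congrFun hab r
          rw [he₁, he₂] at this
          omega
        have hd₁ : (n:ℤ) ∣ t₁ - (r:ℤ) := Int.dvd_self_sub_of_emod_eq ht₁r
        have hd₂ : (n:ℤ) ∣ t₂ - (r:ℤ) := Int.dvd_self_sub_of_emod_eq ht₂r
        have ht : t₁ = t₂ := by
          have e₁ := Int.ediv_mul_cancel hd₁
          have e₂ := Int.ediv_mul_cancel hd₂
          rw [hq] at e₁
          omega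
        rw [hrun₁ m hm, hrun₂ m hm, ht]
      ext m
      have hmn := Int.emod_nonneg m (by omega : (n:ℤ) ≠ 0)
      have hml := Int.emod_lt_of_pos m (by exact_mod_cast hn0 : (0:ℤ) < n)
      exact key ⟨(m % n).toNat, by omega⟩ m (by push_cast; omega)
    have := betaSet_inj hs₁ hp₁ hs₂ hp₂ hBeq
    exact Subtype.ext this
  · -- SurjOn
    rintro a ha
    obtain ⟨L, hs, hp, hcore, heq⟩ := surj_core hn0 a ha
    exact ⟨⟨L, ⟨hs, hp⟩⟩, hcore, heq⟩
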